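/- Let G = (V,E;w) be a finite simple undirected graph with positive vertex weights and no isolated vertices, and let α* be its minimal α-ratio. If for some ε > 0 a nonempty set B̂ ⊆ V minimizes cap(B,ε) over all nonempty B ⊆ V and B̂ is a bottleneck (i.e. α(B̂) = α*), then B̂ is the maximal bottleneck of G. -/

import Mathlib

open Finset

/-- The total weight of a finite set of vertices. -/
def wsum {V : Type*} (w : V → ℝ) (S : Finset V) : ℝ := ∑ v ∈ S, w v

/-- The neighborhood `Γ(S)` of a set `S` of vertices: all vertices adjacent to at least one
vertex of `S`. -/
def nbhd {V : Type*} [Fintype V] [DecidableEq V] (G : SimpleGraph V) [DecidableRel G.Adj]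
    (S : Finset V) : Finset V :=
  univ.filter fun v => ∃ u ∈ S, G.Adj u v

/-- The α-ratio `α(S) = w(Γ(S)) / w(S)` of a set `S`. -/
noncomputable def alphaR {V : Type*} [Fintype V] [DecidableEq V] (G : SimpleGraph V)
    [DecidableRel G.Adj] (w : V → ℝ) (S : Finset V) : ℝ :=
  wsum w (nbhd G S) / wsum w S

/-- `B` is a maximal bottleneck: it is nonempty, its α-ratio is minimal among all nonempty
subsets (i.e. `α(B) = α*`), and every strictly larger subset has strictly larger α-ratio. -/
def IsMaxBottleneck {V : Type*} [Fintype V] [DecidableEq V] (G : SimpleGraph V)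
    [DecidableRel G.Adj] (w : V → ℝ) (B : Finset V) : Prop :=
  B.Nonempty ∧ (∀ S : Finset V, S.Nonempty → alphaR G w B ≤ alphaR G w S) ∧
    ∀ B' : Finset V, B ⊂ B' → alphaR G w B < alphaR G w B'

/-- The capacity `cap(B,ε) = α*·(w(V) − w(B)) + w(Γ(B)) + (n − |B|)·ε` of the cut with
source side `{s} ∪ B ∪ {ũ : u ∈ Γ(B)}` in the network `N(G,α*,ε)`, where `n = |V|`. -/
noncomputable def capEps {V : Type*} [Fintype V] [DecidableEq V] (G : SimpleGraph V)
    [DecidableRel G.Adj] (w : V → ℝ) (astar eps : ℝ) (B : Finset V) : ℝ :=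
  astar * (wsum w univ - wsum w B) + wsum w (nbhd G B) +
    ((Fintype.card V : ℝ) - B.card) * eps

/-- if for some `ε > 0` a nonempty `B̂ ⊆ V` minimizes `cap(B,ε)` over all
nonempty `B ⊆ V` and `B̂` is a bottleneck (`α(B̂) = α*`), then `B̂` is the maximal
bottleneck of `G`. -/
theorem min_capEps_bottleneck_is_maximal {V : Type*} [Fintype V] [DecidableEq V]
    (G : SimpleGraph V) [DecidableRel G.Adj] (w : V → ℝ)
    (hw : ∀ v, 0 < w v) (hiso : ∀ v : V, ∃ u, G.Adj v u)
    (astar : ℝ)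
    (hstar : IsLeast {r : ℝ | ∃ S : Finset V, S.Nonempty ∧ r = alphaR G w S} astar)
    (eps : ℝ) (heps : 0 < eps)
    (Bhat : Finset V) (hne : Bhat.Nonempty)
    (hmin : ∀ B : Finset V, B.Nonempty →
      capEps G w astar eps Bhat ≤ capEps G w astar eps B)
    (hbot : alphaR G w Bhat = astar) :
    IsMaxBottleneck G w Bhat := by
  have hwpos : ∀ S : Finset V, S.Nonempty → 0 < wsum w S := fun S hS =>
    Finset.sum_pos (fun v _ => hw v) hS
  refine ⟨hne, ?_, ?_⟩
  · intro S hS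
    rw [hbot]
    exact hstar.2 ⟨S, hS, rfl⟩
  · intro B' hB'
    have hB'ne : B'.Nonempty := hne.mono hB'.subset
    have hge : astar ≤ alphaR G w B' := hstar.2 ⟨B', hB'ne, rfl⟩
    rw [hbot]
    rcases lt_or_eq_of_le hge with h | h
    · exact h
    · exfalso
      -- α(B') = α*, derive contradiction with minimality of cap
      have hB'eq : wsum w (nbhd G B') = astar * wsum w B' := by
        have := (hwpos B' hB'ne).ne'
        unfold alphaR at h
        rw [eq_div_iff this] at h
        linarith [h]
      have hBeq : wsum w (nbhd G Bhat) = astar * wsum w Bhat := by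
        have := (hwpos Bhat hne).ne'
        unfold alphaR at hbot
        rw [div_eq_iff this] at hbot
        linarith [hbot]
      have hmin' := hmin B' hB'ne
      have hcard : (Bhat.card : ℝ) < B'.card := by
        exact_mod_cast Finset.card_lt_card hB'
      simp only [capEps, hB'eq, hBeq] at hmin'
      nlinarith [hmin', hcard, heps]
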